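/- Let Q be the quiver with vertices 0,1,2,3 and arrows δ: 0→1, α,β: 1→2, γ: 2→3, and let I = ⟨δ(α−β), (α−β)γ⟩. Then the presentation (Q,I) is neither left nor right compatible: there is no choice of path u([e_1],[δβ]) satisfying the right compatibility condition, and no choice of v([e_2],[βγ]) satisfying the left compatibility condition. -/

import Mathlib

open Quiver

universe v u

/-- The type of all paths in the quiver `V`, together with their endpoints. -/
abbrev PathsIn (V : Type u) [Quiver.{v} V] : Type (max u v) :=
  Σ x y : V, Quiver.Path x y

variable (k : Type*) [Field k] (V : Type u) [Quiver.{v} V]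

/-- The underlying vector space of the path algebra: the free `k`-module on paths. -/
abbrev PathVec := (PathsIn V) →₀ k

/-- The length of a path. -/
def pathLen (p : PathsIn V) : ℕ := p.2.2.length

/-- Composition of composable paths. -/
def pcomp (p q : PathsIn V) (h : p.2.1 = q.1) : PathsIn V :=
  ⟨p.1, q.2.1, p.2.2.comp (h.symm ▸ q.2.2)⟩

open scoped Classical in
/-- Multiplication `u ρ w` of an element `ρ` of the path algebra by paths `u`, `w`. -/
noncomputable def pmul (u : PathsIn V) (ρ : PathVec k V) (w : PathsIn V) : PathVec k V :=
  ρ.sum fun p c => if h : u.2.1 = p.1 ∧ p.2.1 = w.1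
    then Finsupp.single (pcomp V (pcomp V u p h.1) w h.2) c else 0

/-- The two-sided ideal of the path algebra generated by a set `S`. -/
noncomputable def idealGen (S : Set (PathVec k V)) : Submodule k (PathVec k V) :=
  Submodule.span k {x | ∃ u ρ w, ρ ∈ S ∧ x = pmul k V u ρ w}

open scoped Classical in
/-- A minimal relation: an element of `I`, with all paths in its support parallel,
such that no proper nonempty subsum lies in `I`. -/
def IsMinimalRelation (I : Submodule k (PathVec k V)) (ρ : PathVec k V) : Prop :=
  ρ ∈ I ∧ (∃ x y : V, ∀ p ∈ ρ.support, p.1 = x ∧ p.2.1 = y) ∧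
    ∀ J : Finset (PathsIn V), J ⊆ ρ.support → J.Nonempty → J ≠ ρ.support →
      ρ.filter (· ∈ J) ∉ I

/-- The homotopy relation `∼` on paths: the smallest equivalence relation such that
paths appearing in a minimal relation are equivalent, compatible with two-sided
composition. -/
inductive HRel (I : Submodule k (PathVec k V)) : PathsIn V → PathsIn V → Prop
  | of (ρ : PathVec k V) (hρ : IsMinimalRelation k V I ρ) (p q : PathsIn V)
      (hp : p ∈ ρ.support) (hq : q ∈ ρ.support) : HRel I p q
  | refl (p : PathsIn V) : HRel I p p
  | symm {p q} : HRel I p q → HRel I q p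
  | trans {p q r} : HRel I p q → HRel I q r → HRel I p r
  | compat (a x y b : V) (u v : Quiver.Path x y) (w : Quiver.Path a x) (w' : Quiver.Path y b) :
      HRel I ⟨x, y, u⟩ ⟨x, y, v⟩ →
      HRel I ⟨a, b, (w.comp u).comp w'⟩ ⟨a, b, (w.comp v).comp w'⟩

/-- A path lies in `I` (i.e. is zero in `A = kQ/I`). -/
def memI (I : Submodule k (PathVec k V)) (p : PathsIn V) : Prop :=
  (Finsupp.single p 1 : PathVec k V) ∈ I

/-- The span of paths of length at least `m` (the `m`-th power of the arrow ideal). -/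
noncomputable def arrowPow (m : ℕ) : Submodule k (PathVec k V) :=
  Submodule.span k {x | ∃ p : PathsIn V, m ≤ pathLen V p ∧ x = Finsupp.single p 1}

/-- The ideal `I` is admissible: `F^m ⊆ I ⊆ F^2` for some `m ≥ 2`. -/
def IsAdmissible (I : Submodule k (PathVec k V)) : Prop :=
  (∃ m, 2 ≤ m ∧ arrowPow k V m ≤ I) ∧ I ≤ arrowPow k V 2

/-- Homotopy coherence of a presentation. -/
def HomotopyCoherent (I : Submodule k (PathVec k V)) : Prop :=
  ∀ p q, HRel k V I p q → (memI k V I p ↔ memI k V I q)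

/-- A path represents a class in `Σ_ν`: no path equivalent to it lies in `I`. -/
def SigmaClass (I : Submodule k (PathVec k V)) (p : PathsIn V) : Prop :=
  ∀ q, HRel k V I p q → ¬ memI k V I q

/-- The poset `Σ_ν`: equivalence classes (under `∼`) of paths not equivalent to any
path in `I`. -/
def SigmaNu (I : Submodule k (PathVec k V)) :=
  Quot (fun a b : {p : PathsIn V // SigmaClass k V I p} => HRel k V I a.1 b.1)

/-- The relation `[w] ≥ [w']` on `Σ_ν`: `[w'] = [u][w][v]` for some classes
`[u], [v] ∈ Σ_ν`. -/
def geSigmaNu (I : Submodule k (PathVec k V)) (s s' : SigmaNu k V I) : Prop :=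
  ∃ (p q u v : PathsIn V) (hp : SigmaClass k V I p) (hq : SigmaClass k V I q),
    SigmaClass k V I u ∧ SigmaClass k V I v ∧
    s = Quot.mk _ ⟨p, hp⟩ ∧ s' = Quot.mk _ ⟨q, hq⟩ ∧
    ∃ (h1 : u.2.1 = p.1) (h2 : p.2.1 = v.1),
      HRel k V I q (pcomp V (pcomp V u p h1) v h2)

/-- A right compatible presentation: a choice of a path `u s s'` for each pair
`s > s'` in `Σ_ν` such that `s' = [v] s [u s s']` and
`u s s'' ∼ (u s s') (u s' s'')` for chains `s > s' > s''`. -/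
structure RightCompat (I : Submodule k (PathVec k V)) where
  /-- The chosen path `u(s, s')`. -/
  u : ∀ s s' : SigmaNu k V I, geSigmaNu k V I s s' → s ≠ s' → PathsIn V
  /-- Condition (i): `s' = [v] s [u(s, s')]`. -/
  spec : ∀ s s' (h : geSigmaNu k V I s s') (hne : s ≠ s'),
    ∃ (p v : PathsIn V) (hp : SigmaClass k V I p), SigmaClass k V I v ∧
      s = Quot.mk _ ⟨p, hp⟩ ∧
      ∃ (h1 : v.2.1 = p.1) (h2 : p.2.1 = (u s s' h hne).1)
        (hc : SigmaClass k V I (pcomp V (pcomp V v p h1) (u s s' h hne) h2)),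
        s' = Quot.mk _ ⟨pcomp V (pcomp V v p h1) (u s s' h hne) h2, hc⟩
  /-- Condition (ii): `u(s, s'') ∼ u(s, s') u(s', s'')` for `s > s' > s''`. -/
  coh : ∀ s s' s'' (h1 : geSigmaNu k V I s s') (hne1 : s ≠ s')
      (h2 : geSigmaNu k V I s' s'') (hne2 : s' ≠ s'')
      (h3 : geSigmaNu k V I s s'') (hne3 : s ≠ s''),
    ∃ hc : (u s s' h1 hne1).2.1 = (u s' s'' h2 hne2).1,
      HRel k V I (u s s'' h3 hne3) (pcomp V (u s s' h1 hne1) (u s' s'' h2 hne2) hc)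


/-- A left compatible presentation: the dual of `RightCompat`, with the chosen paths
composed on the left: `s' = [v s s'] s [u]` and `v s s'' ∼ (v s' s'') (v s s')`. -/
structure LeftCompat (I : Submodule k (PathVec k V)) where
  /-- The chosen path `v(s, s')`. -/
  v : ∀ s s' : SigmaNu k V I, geSigmaNu k V I s s' → s ≠ s' → PathsIn V
  /-- Condition (i): `s' = [v(s, s')] s [u]`. -/
  spec : ∀ s s' (h : geSigmaNu k V I s s') (hne : s ≠ s'),
    ∃ (p u : PathsIn V) (hp : SigmaClass k V I p), SigmaClass k V I u ∧
      s = Quot.mk _ ⟨p, hp⟩ ∧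
      ∃ (h1 : (v s s' h hne).2.1 = p.1) (h2 : p.2.1 = u.1)
        (hc : SigmaClass k V I (pcomp V (pcomp V (v s s' h hne) p h1) u h2)),
        s' = Quot.mk _ ⟨pcomp V (pcomp V (v s s' h hne) p h1) u h2, hc⟩
  /-- Condition (ii): `v(s, s'') ∼ v(s', s'') v(s, s')` for `s > s' > s''`. -/
  coh : ∀ s s' s'' (h1 : geSigmaNu k V I s s') (hne1 : s ≠ s')
      (h2 : geSigmaNu k V I s' s'') (hne2 : s' ≠ s'')
      (h3 : geSigmaNu k V I s s'') (hne3 : s ≠ s''),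
    ∃ hc : (v s' s'' h2 hne2).2.1 = (v s s' h1 hne1).1,
      HRel k V I (v s s'' h3 hne3) (pcomp V (v s' s'' h2 hne2) (v s s' h1 hne1) hc)

/-- The vertices `0, 1, 2, 3` of the quiver of Statement 19. -/
inductive V4 : Type
  | v0 | v1 | v2 | v3

/-- The arrows `δ : 0 → 1`, `α β : 1 → 2`, `γ : 2 → 3`. -/
inductive V4.Arr : V4 → V4 → Type
  | δ : V4.Arr .v0 .v1
  | α : V4.Arr .v1 .v2
  | β : V4.Arr .v1 .v2
  | γ : V4.Arr .v2 .v3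

instance : Quiver.{0} V4 := ⟨V4.Arr⟩

open V4 in
/-- The path `δα`. -/
def pδα : PathsIn V4 := ⟨V4.v0, V4.v2, (Quiver.Path.nil.cons V4.Arr.δ).cons V4.Arr.α⟩
/-- The path `δβ`. -/
def pδβ : PathsIn V4 := ⟨V4.v0, V4.v2, (Quiver.Path.nil.cons V4.Arr.δ).cons V4.Arr.β⟩
/-- The path `αγ`. -/
def pαγ : PathsIn V4 := ⟨V4.v1, V4.v3, (Quiver.Path.nil.cons V4.Arr.α).cons V4.Arr.γ⟩
/-- The path `βγ`. -/
def pβγ : PathsIn V4 := ⟨V4.v1, V4.v3, (Quiver.Path.nil.cons V4.Arr.β).cons V4.Arr.γ⟩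

/-- The ideal `I = ⟨δ(α−β), (α−β)γ⟩`. -/
noncomputable def I19 : Submodule k (PathVec k V4) :=
  idealGen k V4
    {(Finsupp.single pδα 1 - Finsupp.single pδβ 1 : PathVec k V4),
     (Finsupp.single pαγ 1 - Finsupp.single pβγ 1 : PathVec k V4)}

namespace S19
open Quiver

deriving instance DecidableEq for V4

abbrev E0 : PathsIn V4 := ⟨V4.v0, V4.v0, .nil⟩
abbrev E1 : PathsIn V4 := ⟨V4.v1, V4.v1, .nil⟩
abbrev E2 : PathsIn V4 := ⟨V4.v2, V4.v2, .nil⟩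
abbrev E3 : PathsIn V4 := ⟨V4.v3, V4.v3, .nil⟩
abbrev Pδ : PathsIn V4 := ⟨V4.v0, V4.v1, Path.nil.cons V4.Arr.δ⟩
abbrev Pγ : PathsIn V4 := ⟨V4.v2, V4.v3, Path.nil.cons V4.Arr.γ⟩
abbrev mkAB (e : V4.Arr V4.v1 V4.v2) : PathsIn V4 := ⟨V4.v1, V4.v2, Path.nil.cons e⟩
abbrev Pα : PathsIn V4 := mkAB V4.Arr.α
abbrev Pβ : PathsIn V4 := mkAB V4.Arr.β
def pδαγ : PathsIn V4 := ⟨V4.v0, V4.v3, ((Path.nil.cons V4.Arr.δ).cons V4.Arr.α).cons V4.Arr.γ⟩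
def pδβγ : PathsIn V4 := ⟨V4.v0, V4.v3, ((Path.nil.cons V4.Arr.δ).cons V4.Arr.β).cons V4.Arr.γ⟩

/-- swap α and β on arrows -/
def sA : ∀ {x y : V4}, V4.Arr x y → V4.Arr x y
  | _, _, .δ => .δ
  | _, _, .α => .β
  | _, _, .β => .α
  | _, _, .γ => .γ

/-- swap α and β on paths -/
def sPa : ∀ {x y : V4}, Path x y → Path x y
  | _, _, .nil => .nil
  | _, _, .cons p e => (sPa p).cons (sA e)

@[simp] lemma sA_sA {x y : V4} (e : V4.Arr x y) : sA (sA e) = e := by cases e <;> rfl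

@[simp] lemma sPa_cons {x y z : V4} (p : Path x y) (e : V4.Arr y z) :
    sPa (p.cons e) = (sPa p).cons (sA e) := by
  simp [sPa]

@[simp] lemma sPa_nil {x : V4} : sPa (Path.nil : Path x x) = Path.nil := by
  simp [sPa]

@[simp] lemma sPa_sPa {x y : V4} (p : Path x y) : sPa (sPa p) = p := by
  induction p with
  | nil => simp
  | cons p e ih => simp [ih]

@[simp] lemma sPa_length {x y : V4} (p : Path x y) : (sPa p).length = p.length := by
  induction p with
  | nil => simp
  | cons p e ih => simp [Path.length_cons, ih]

lemma sPa_comp {x y z : V4} (p : Path x y) (q : Path y z) :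
    sPa (p.comp q) = (sPa p).comp (sPa q) := by
  induction q with
  | nil => simp
  | cons q e ih => simp [Path.comp_cons, ih]

/-- swap on PathsIn -/
def sP (p : PathsIn V4) : PathsIn V4 := ⟨p.1, p.2.1, sPa p.2.2⟩

@[simp] lemma sP_sP (p : PathsIn V4) : sP (sP p) = p := by
  obtain ⟨x, y, p⟩ := p; simp [sP]

lemma sP_eq_iff (a t : PathsIn V4) : (a = sP t) ↔ (sP a = t) :=
  ⟨fun h => by rw [h, sP_sP], fun h => by rw [← h, sP_sP]⟩

lemma sig_eq {x y x' y' : V4} {p : Path x y} {q : Path x' y'}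
    (h : (⟨x, y, p⟩ : PathsIn V4) = ⟨x', y', q⟩) : x = x' ∧ y = y' ∧ HEq p q := by
  cases h; exact ⟨rfl, rfl, HEq.rfl⟩

/-- paths ending at v0 or v1 are fixed by the swap -/
lemma sPa_fix_to {x y : V4} (p : Path x y) (hy : y = V4.v0 ∨ y = V4.v1) : sPa p = p := by
  induction p with
  | nil => simp
  | cons p e ih =>
    rcases hy with rfl | rfl
    · change V4.Arr _ _ at e; cases e
    · change V4.Arr _ _ at e; cases e
      simp [ih (Or.inl rfl), sA]

/-- paths starting at v2 or v3 are fixed by the swap -/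
lemma sPa_fix_from {x y : V4} (p : Path x y) (hx : x = V4.v2 ∨ x = V4.v3) :
    sPa p = p ∧ (y = V4.v2 ∨ y = V4.v3) := by
  induction p with
  | nil => exact ⟨by simp, hx⟩
  | cons p e ih =>
    obtain ⟨h1, h2⟩ := ih
    rcases h2 with rfl | rfl
    · change V4.Arr _ _ at e; cases e
      exact ⟨by simp [h1, sA], Or.inr rfl⟩
    · change V4.Arr _ _ at e; cases e

/-- classification: only path into v0 is nil -/
lemma classTo0 (p : PathsIn V4) (h : p.2.1 = V4.v0) : p = E0 := by
  obtain ⟨x, y, p⟩ := p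
  dsimp at h; subst h
  cases p with
  | nil => rfl
  | cons p e => change V4.Arr _ _ at e; cases e

/-- classification: paths into v1 -/
lemma classTo1 (p : PathsIn V4) (h : p.2.1 = V4.v1) : p = E1 ∨ p = Pδ := by
  obtain ⟨x, y, p⟩ := p
  dsimp at h; subst h
  cases p with
  | nil => exact Or.inl rfl
  | cons p e =>
    change V4.Arr _ _ at e; cases e
    obtain ⟨rfl, -, h2⟩ := sig_eq (classTo0 ⟨x, V4.v0, p⟩ rfl)
    rw [heq_eq_eq] at h2
    subst h2
    exact Or.inr rfl

/-- classification: paths out of v3 -/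
lemma classFrom3 (p : PathsIn V4) (h : p.1 = V4.v3) : p = E3 := by
  obtain ⟨x, y, p⟩ := p
  dsimp at h; subst h
  induction p with
  | nil => rfl
  | cons p e ih =>
    obtain ⟨-, rfl, h2⟩ := sig_eq ih
    rw [heq_eq_eq] at h2
    subst h2
    change V4.Arr _ _ at e; cases e

/-- classification: paths out of v2 -/
lemma classFrom2 (p : PathsIn V4) (h : p.1 = V4.v2) : p = E2 ∨ p = Pγ := by
  obtain ⟨x, y, p⟩ := p
  dsimp at h; subst h
  induction p with
  | nil => exact Or.inl rfl
  | cons p e ih =>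
    rcases ih with h | h <;> obtain ⟨-, rfl, h2⟩ := sig_eq h <;>
      rw [heq_eq_eq] at h2 <;> subst h2
    · change V4.Arr _ _ at e; cases e
      exact Or.inr rfl
    · change V4.Arr _ _ at e; cases e


section Algebra
variable (k : Type*) [Field k]

noncomputable abbrev g1 : PathVec k V4 := Finsupp.single pδα 1 - Finsupp.single pδβ 1
noncomputable abbrev g2 : PathVec k V4 := Finsupp.single pαγ 1 - Finsupp.single pβγ 1
noncomputable abbrev g3 : PathVec k V4 := Finsupp.single pδαγ 1 - Finsupp.single pδβγ 1

lemma pmul_single (u p w : PathsIn V4) (c : k) :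
    pmul k V4 u (Finsupp.single p c) w =
      if h : u.2.1 = p.1 ∧ p.2.1 = w.1
        then Finsupp.single (pcomp V4 (pcomp V4 u p h.1) w h.2) c else 0 := by
  classical
  unfold pmul
  rw [Finsupp.sum_single_index]
  all_goals split <;> simp

lemma pmul_sub (u : PathsIn V4) (x y : PathVec k V4) (w : PathsIn V4) :
    pmul k V4 u (x - y) w = pmul k V4 u x w - pmul k V4 u y w := by
  classical
  unfold pmul
  apply Finsupp.sum_sub_index
  intro p b1 b2
  split <;> simp [Finsupp.single_sub]

lemma span3 : I19 k ≤ Submodule.span k {g1 k, g2 k, g3 k} := by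
  apply Submodule.span_le.mpr
  rintro x ⟨u, ρ, w, hρ, rfl⟩
  rcases hρ with rfl | rfl
  · rw [pmul_sub, pmul_single, pmul_single]
    by_cases h : u.2.1 = pδα.1 ∧ pδα.2.1 = w.1
    · have h' : u.2.1 = pδβ.1 ∧ pδβ.2.1 = w.1 := h
      rw [dif_pos h, dif_pos h']
      obtain rfl := classTo0 u h.1
      rcases classFrom2 w h.2.symm with rfl | rfl
      · exact Submodule.subset_span (by left; rfl)
      · exact Submodule.subset_span (by right; right; rfl)
    · have h' : ¬(u.2.1 = pδβ.1 ∧ pδβ.2.1 = w.1) := h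
      rw [dif_neg h, dif_neg h', sub_zero]
      exact Submodule.zero_mem _
  · rw [pmul_sub, pmul_single, pmul_single]
    by_cases h : u.2.1 = pαγ.1 ∧ pαγ.2.1 = w.1
    · have h' : u.2.1 = pβγ.1 ∧ pβγ.2.1 = w.1 := h
      rw [dif_pos h, dif_pos h']
      obtain rfl := classFrom3 w h.2.symm
      rcases classTo1 u h.1 with rfl | rfl
      · exact Submodule.subset_span (by right; left; rfl)
      · exact Submodule.subset_span (by right; right; rfl)
    · have h' : ¬(u.2.1 = pβγ.1 ∧ pβγ.2.1 = w.1) := h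
      rw [dif_neg h, dif_neg h', sub_zero]
      exact Submodule.zero_mem _

lemma mem_span3 {x : PathVec k V4} (h : x ∈ I19 k) :
    ∃ c1 c2 c3 : k, x = c1 • g1 k + c2 • g2 k + c3 • g3 k := by
  have h' := span3 k h
  rw [Submodule.mem_span_insert] at h'
  obtain ⟨c1, z1, hz1, rfl⟩ := h'
  rw [Submodule.mem_span_insert] at hz1
  obtain ⟨c2, z2, hz2, rfl⟩ := hz1
  rw [Submodule.mem_span_singleton] at hz2
  obtain ⟨c3, rfl⟩ := hz2
  exact ⟨c1, c2, c3, by abel⟩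

lemma g1_mem : g1 k ∈ I19 k := by
  apply Submodule.subset_span
  refine ⟨E0, g1 k, E2, by left; rfl, ?_⟩
  rw [pmul_sub, pmul_single, pmul_single, dif_pos ⟨rfl, rfl⟩, dif_pos ⟨rfl, rfl⟩]
  rfl

lemma g2_mem : g2 k ∈ I19 k := by
  apply Submodule.subset_span
  refine ⟨E1, g2 k, E3, by right; rfl, ?_⟩
  rw [pmul_sub, pmul_single, pmul_single, dif_pos ⟨rfl, rfl⟩, dif_pos ⟨rfl, rfl⟩]
  rfl

end Algebra

lemma nδ : pδα ≠ pδβ := by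
  intro h
  obtain ⟨-, -, h2⟩ := sig_eq h
  rw [heq_eq_eq] at h2
  simp [pδα, pδβ] at h2

lemma nγ : pαγ ≠ pβγ := by
  intro h
  obtain ⟨-, -, h2⟩ := sig_eq h
  rw [heq_eq_eq] at h2
  simp [pαγ, pβγ] at h2

lemma nδγ : pδαγ ≠ pδβγ := by
  intro h
  obtain ⟨-, -, h2⟩ := sig_eq h
  rw [heq_eq_eq] at h2
  simp [pδαγ, pδβγ] at h2

lemma nαβ : Pα ≠ Pβ := by
  intro h
  obtain ⟨-, -, h2⟩ := sig_eq h
  rw [heq_eq_eq] at h2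
  simp at h2

@[simp] lemma sP_pδα : sP pδα = pδβ := by simp [sP, pδα, pδβ, sPa, sA]
@[simp] lemma sP_pδβ : sP pδβ = pδα := by simp [sP, pδα, pδβ, sPa, sA]
@[simp] lemma sP_pαγ : sP pαγ = pβγ := by simp [sP, pαγ, pβγ, sPa, sA]
@[simp] lemma sP_pβγ : sP pβγ = pαγ := by simp [sP, pαγ, pβγ, sPa, sA]
@[simp] lemma sP_pδαγ : sP pδαγ = pδβγ := by simp [sP, pδαγ, pδβγ, sPa, sA]
@[simp] lemma sP_pδβγ : sP pδβγ = pδαγ := by simp [sP, pδαγ, pδβγ, sPa, sA]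
@[simp] lemma sP_Pα : sP Pα = Pβ := by simp [sP, sPa, sA]
@[simp] lemma sP_Pβ : sP Pβ = Pα := by simp [sP, sPa, sA]
@[simp] lemma sP_E1 : sP E1 = E1 := by simp [sP]
@[simp] lemma sP_E2 : sP E2 = E2 := by simp [sP]

lemma eq_sP_iff (a t : PathsIn V4) : (a = sP t) ↔ (sP a = t) :=
  ⟨fun h => by rw [h, sP_sP], fun h => by rw [← h, sP_sP]⟩

noncomputable instance : DecidableEq (PathsIn V4) := Classical.decEq _

section Algebra2
variable (k : Type*) [Field k]

lemma combo_sigma (c1 c2 c3 : k) (t : PathsIn V4) :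
    (c1 • g1 k + c2 • g2 k + c3 • g3 k) (sP t)
      = -((c1 • g1 k + c2 • g2 k + c3 • g3 k) t) := by
  classical
  simp only [Finsupp.add_apply, Finsupp.coe_smul, Pi.smul_apply, Finsupp.sub_apply,
    Finsupp.single_apply, smul_eq_mul, eq_sP_iff, sP_pδα, sP_pδβ, sP_pαγ, sP_pβγ,
    sP_pδαγ, sP_pδβγ]
  ring

lemma noSingle (p : PathsIn V4) (c : k) (hc : c ≠ 0) : Finsupp.single p c ∉ I19 k := by
  intro hmem
  obtain ⟨c1, c2, c3, hrepr⟩ := mem_span3 k hmem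
  by_cases hfix : sP p = p
  · have h1 : p ≠ pδα := by rintro rfl; rw [sP_pδα] at hfix; exact nδ hfix.symm
    have h2 : p ≠ pδβ := by rintro rfl; rw [sP_pδβ] at hfix; exact nδ hfix
    have h3 : p ≠ pαγ := by rintro rfl; rw [sP_pαγ] at hfix; exact nγ hfix.symm
    have h4 : p ≠ pβγ := by rintro rfl; rw [sP_pβγ] at hfix; exact nγ hfix
    have h5 : p ≠ pδαγ := by rintro rfl; rw [sP_pδαγ] at hfix; exact nδγ hfix.symm
    have h6 : p ≠ pδβγ := by rintro rfl; rw [sP_pδβγ] at hfix; exact nδγ hfix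
    have hval := DFunLike.congr_fun hrepr p
    rw [Finsupp.single_eq_same] at hval
    classical
    simp only [Finsupp.add_apply, Finsupp.coe_smul, Pi.smul_apply, Finsupp.sub_apply,
      smul_eq_mul, Finsupp.single_eq_of_ne h1, Finsupp.single_eq_of_ne h2,
      Finsupp.single_eq_of_ne h3, Finsupp.single_eq_of_ne h4,
      Finsupp.single_eq_of_ne h5, Finsupp.single_eq_of_ne h6] at hval
    simp at hval
    exact hc hval
  · have e1 := DFunLike.congr_fun hrepr (sP p)
    have e2 := DFunLike.congr_fun hrepr p
    rw [combo_sigma, ← e2, Finsupp.single_eq_same,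
      Finsupp.single_eq_of_ne hfix] at e1
    exact hc (neg_eq_zero.mp e1.symm)

lemma notMemI (p : PathsIn V4) : ¬ memI k V4 (I19 k) p :=
  noSingle k p 1 one_ne_zero

lemma sigmaAll (p : PathsIn V4) : SigmaClass k V4 (I19 k) p :=
  fun q _ => notMemI k q

lemma supp_g1 : (g1 k).support = {pδα, pδβ} := by
  classical
  ext t
  rw [Finsupp.mem_support_iff]
  simp only [Finsupp.sub_apply, Finsupp.single_apply, Finset.mem_insert, Finset.mem_singleton]
  by_cases h1 : pδα = t
  · subst h1
    simp [Ne.symm nδ]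
  · by_cases h2 : pδβ = t
    · subst h2
      simp [h1, nδ]
    · rw [if_neg h1, if_neg h2, sub_self]
      constructor
      · intro h; exact absurd rfl h
      · rintro (rfl | rfl)
        · exact absurd rfl h1
        · exact absurd rfl h2

lemma supp_g2 : (g2 k).support = {pαγ, pβγ} := by
  classical
  ext t
  rw [Finsupp.mem_support_iff]
  simp only [Finsupp.sub_apply, Finsupp.single_apply, Finset.mem_insert, Finset.mem_singleton]
  by_cases h1 : pαγ = t
  · subst h1
    simp [Ne.symm nγ]
  · by_cases h2 : pβγ = t
    · subst h2
      simp [h1, nγ]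
    · rw [if_neg h1, if_neg h2, sub_self]
      constructor
      · intro h; exact absurd rfl h
      · rintro (rfl | rfl)
        · exact absurd rfl h1
        · exact absurd rfl h2

lemma filter_inst (k : Type*) [Field k] (g : PathVec k V4) (J : Finset (PathsIn V4))
    (i1 : DecidablePred (· ∈ J)) :
    @Finsupp.filter _ _ _ _ i1 g = Finsupp.filter (· ∈ J) g := by
  congr 1

lemma pair_minrel (a b : PathsIn V4) (g : PathVec k V4) (hg : g ∈ I19 k)
    (hsupp : g.support = {a, b}) (hab : a ≠ b) (ha : g a = 1) (hb : g b = -1)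
    (hx : a.1 = b.1) (hy : a.2.1 = b.2.1) :
    IsMinimalRelation k V4 (I19 k) g := by
  refine ⟨hg, ⟨a.1, a.2.1, ?_⟩, ?_⟩
  · intro p hp
    rw [hsupp, Finset.mem_insert, Finset.mem_singleton] at hp
    rcases hp with rfl | rfl
    · exact ⟨rfl, rfl⟩
    · exact ⟨hx.symm, hy.symm⟩
  · intro J hsub hne hnesupp
    rw [hsupp] at hsub hnesupp
    by_cases hA : a ∈ J <;> by_cases hB : b ∈ J
    · exact absurd (Finset.Subset.antisymm hsub
        (Finset.insert_subset_iff.mpr ⟨hA, Finset.singleton_subset_iff.mpr hB⟩)) hnesupp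
    · have key : ∀ (i : DecidablePred (fun t : PathsIn V4 => t ∈ J)),
          @Finsupp.filter (PathsIn V4) k _ (fun t => t ∈ J) i g = Finsupp.single a 1 := by
        intro i
        ext t
        rw [Finsupp.filter_apply]
        split
        · rename_i ht
          have := hsub ht
          rw [Finset.mem_insert, Finset.mem_singleton] at this
          rcases this with rfl | rfl
          · rw [ha, Finsupp.single_eq_same]
          · exact absurd ht hB
        · rename_i ht
          rw [Finsupp.single_eq_of_ne (by rintro rfl; exact ht hA)]
      intro hmem
      rw [key _] at hmem
      exact noSingle k a 1 one_ne_zero hmem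
    · have key : ∀ (i : DecidablePred (fun t : PathsIn V4 => t ∈ J)),
          @Finsupp.filter (PathsIn V4) k _ (fun t => t ∈ J) i g = Finsupp.single b (-1) := by
        intro i
        ext t
        rw [Finsupp.filter_apply]
        split
        · rename_i ht
          have := hsub ht
          rw [Finset.mem_insert, Finset.mem_singleton] at this
          rcases this with rfl | rfl
          · exact absurd ht hA
          · rw [hb, Finsupp.single_eq_same]
        · rename_i ht
          rw [Finsupp.single_eq_of_ne (by rintro rfl; exact ht hB)]
      intro hmem
      rw [key _] at hmem
      exact noSingle k b (-1) (neg_ne_zero.mpr one_ne_zero) hmem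
    · obtain ⟨t, ht⟩ := hne
      have := hsub ht
      rw [Finset.mem_insert, Finset.mem_singleton] at this
      rcases this with rfl | rfl
      · exact absurd ht hA
      · exact absurd ht hB

lemma minrel_g1 : IsMinimalRelation k V4 (I19 k) (g1 k) := by
  classical
  refine pair_minrel k pδα pδβ (g1 k) (g1_mem k) (supp_g1 k) nδ ?_ ?_ rfl rfl
  · rw [Finsupp.sub_apply, Finsupp.single_eq_same, Finsupp.single_eq_of_ne nδ, sub_zero]
  · rw [Finsupp.sub_apply, Finsupp.single_eq_same, Finsupp.single_eq_of_ne (Ne.symm nδ), zero_sub]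

lemma minrel_g2 : IsMinimalRelation k V4 (I19 k) (g2 k) := by
  classical
  refine pair_minrel k pαγ pβγ (g2 k) (g2_mem k) (supp_g2 k) nγ ?_ ?_ rfl rfl
  · rw [Finsupp.sub_apply, Finsupp.single_eq_same, Finsupp.single_eq_of_ne nγ, sub_zero]
  · rw [Finsupp.sub_apply, Finsupp.single_eq_same, Finsupp.single_eq_of_ne (Ne.symm nγ), zero_sub]

lemma hrel_δ : HRel k V4 (I19 k) pδα pδβ := by
  classical
  exact HRel.of (g1 k) (minrel_g1 k) _ _
    (by rw [supp_g1]; simp) (by rw [supp_g1]; simp)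

lemma hrel_γ : HRel k V4 (I19 k) pαγ pβγ := by
  classical
  exact HRel.of (g2 k) (minrel_g2 k) _ _
    (by rw [supp_g2]; simp) (by rw [supp_g2]; simp)

end Algebra2

/-- invariant relation -/
def Rel (p q : PathsIn V4) : Prop := q = p ∨ (q = sP p ∧ 2 ≤ pathLen V4 p)

lemma pathLen_sP (p : PathsIn V4) : pathLen V4 (sP p) = pathLen V4 p := by
  obtain ⟨x, y, pp⟩ := p
  simp [pathLen, sP]

section Master
variable (k : Type*) [Field k]

lemma hrel_R {p q : PathsIn V4} (h : HRel k V4 (I19 k) p q) : Rel p q := by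
  induction h with
  | of ρ hρ p q hp hq =>
    obtain ⟨c1, c2, c3, hrepr⟩ := mem_span3 k hρ.1
    subst hrepr
    obtain ⟨x, y, hxy⟩ := hρ.2.1
    have hsix : ∀ t ∈ (c1 • g1 k + c2 • g2 k + c3 • g3 k).support,
        t = pδα ∨ t = pδβ ∨ t = pαγ ∨ t = pβγ ∨ t = pδαγ ∨ t = pδβγ := by
      intro t ht
      rw [Finsupp.mem_support_iff] at ht
      by_contra hn
      push_neg at hn
      obtain ⟨n1, n2, n3, n4, n5, n6⟩ := hn
      apply ht
      simp only [Finsupp.add_apply, Finsupp.coe_smul, Pi.smul_apply, Finsupp.sub_apply,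
        smul_eq_mul, Finsupp.single_eq_of_ne n1, Finsupp.single_eq_of_ne n2,
        Finsupp.single_eq_of_ne n3, Finsupp.single_eq_of_ne n4,
        Finsupp.single_eq_of_ne n5, Finsupp.single_eq_of_ne n6]
      ring
    have hp6 := hsix p hp
    have hq6 := hsix q hq
    have hpx := hxy p hp
    have hqx := hxy q hq
    clear hp hq hsix hxy
    rcases hp6 with rfl|rfl|rfl|rfl|rfl|rfl <;> rcases hq6 with rfl|rfl|rfl|rfl|rfl|rfl <;>
      first
        | exact Or.inl rfl
        | (exfalso
           have e1 := (hpx.1.trans hqx.1.symm)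
           have e2 := (hpx.2.trans hqx.2.symm)
           revert e1 e2
           decide)
        | exact Or.inr ⟨by simp, by decide⟩
  | refl p => exact Or.inl rfl
  | symm h ih =>
    rcases ih with rfl | ⟨rfl, hl⟩
    · exact Or.inl rfl
    · exact Or.inr ⟨(sP_sP _).symm, by rwa [pathLen_sP]⟩
  | trans h1 h2 ih1 ih2 =>
    rcases ih1 with rfl | ⟨rfl, hl1⟩
    · exact ih2
    · rcases ih2 with rfl | ⟨rfl, hl2⟩
      · exact Or.inr ⟨rfl, hl1⟩
      · exact Or.inl (sP_sP _)
  | compat a x y b u v w w' h ih =>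
    rcases ih with huv | ⟨huv, hl⟩
    · obtain ⟨-, -, h2⟩ := sig_eq huv
      rw [heq_eq_eq] at h2
      subst h2
      exact Or.inl rfl
    · have h2 : v = sPa u := by
        obtain ⟨-, -, h2⟩ := sig_eq (show (⟨x, y, v⟩ : PathsIn V4) = ⟨x, y, sPa u⟩ from huv)
        rw [heq_eq_eq] at h2
        exact h2
      subst h2
      by_cases hfx : sPa u = u
      · rw [hfx]
        exact Or.inl rfl
      · have hx : x = V4.v0 ∨ x = V4.v1 := by
          cases x
          exacts [Or.inl rfl, Or.inr rfl, absurd (sPa_fix_from u (Or.inl rfl)).1 hfx,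
            absurd (sPa_fix_from u (Or.inr rfl)).1 hfx]
        have hy : y = V4.v2 ∨ y = V4.v3 := by
          cases y
          exacts [absurd (sPa_fix_to u (Or.inl rfl)) hfx, absurd (sPa_fix_to u (Or.inr rfl)) hfx,
            Or.inl rfl, Or.inr rfl]
        refine Or.inr ⟨?_, ?_⟩
        · show (⟨a, b, (w.comp (sPa u)).comp w'⟩ : PathsIn V4)
            = ⟨a, b, sPa ((w.comp u).comp w')⟩
          rw [sPa_comp, sPa_comp, sPa_fix_to w hx, (sPa_fix_from w' hy).1]
        · have h3 : 2 ≤ u.length := hl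
          show 2 ≤ ((w.comp u).comp w').length
          simp only [Path.length_comp]
          omega

end Master

lemma pcomp_eq {x y z : V4} (p : Path x y) (q : Path y z)
    (h : (⟨x, y, p⟩ : PathsIn V4).2.1 = (⟨y, z, q⟩ : PathsIn V4).1) :
    pcomp V4 ⟨x, y, p⟩ ⟨y, z, q⟩ h = ⟨x, z, p.comp q⟩ := rfl

/-- decomposition: if v ⬝ e₁ ⬝ u = (arrow e : v1 ⟶ v2) then u is that arrow -/
lemma D1 {e : V4.Arr V4.v1 V4.v2} {v u : PathsIn V4} (h1 : v.2.1 = E1.1) (h2 : E1.2.1 = u.1)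
    (h : pcomp V4 (pcomp V4 v E1 h1) u h2 = mkAB e) : u = mkAB e := by
  obtain ⟨a, b, vp⟩ := v
  obtain ⟨c, d, up⟩ := u
  dsimp at h1 h2
  subst h1
  subst h2
  have h' : (⟨a, d, (vp.comp (Path.nil : Path V4.v1 V4.v1)).comp up⟩ : PathsIn V4)
      = mkAB e := h
  rw [Path.comp_nil] at h'
  obtain ⟨ha, hd, hpath⟩ := sig_eq h'
  subst ha
  subst hd
  rw [heq_eq_eq] at hpath
  cases up with
  | cons up' e' =>
    rw [Path.comp_cons] at hpath
    injection hpath with hm1 hm2 hpa he2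
    subst hm1
    rw [heq_eq_eq] at hpa he2
    subst he2
    have hlen := congrArg Path.length hpa
    rw [Path.length_comp] at hlen
    cases up' with
    | nil => rfl
    | cons q f => simp [Path.length_cons] at hlen

lemma path20 (p : Path V4.v2 V4.v0) : False := by
  cases p with
  | cons q g => change V4.Arr _ _ at g; cases g

lemma path21 (p : Path V4.v2 V4.v1) : False := by
  cases p with
  | cons q g =>
    change V4.Arr _ _ at g; cases g
    exact path20 q

lemma pathLoop2 (p : Path V4.v2 V4.v2) : p = Path.nil := by
  cases p with
  | nil => rfl
  | cons q g =>
    change V4.Arr _ _ at g; cases g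
    · exact (path21 q).elim
    · exact (path21 q).elim

lemma path10 (p : Path V4.v1 V4.v0) : False := by
  cases p with
  | cons q g => change V4.Arr _ _ at g; cases g

lemma pathLoop1 (p : Path V4.v1 V4.v1) : p = Path.nil := by
  cases p with
  | nil => rfl
  | cons q g =>
    change V4.Arr _ _ at g; cases g
    exact (path10 q).elim

lemma D1' {e : V4.Arr V4.v1 V4.v2} {v u : PathsIn V4} (h1 : v.2.1 = E2.1) (h2 : E2.2.1 = u.1)
    (h : pcomp V4 (pcomp V4 v E2 h1) u h2 = mkAB e) : v = mkAB e := by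
  obtain ⟨a, b, vp⟩ := v
  obtain ⟨c, d, up⟩ := u
  dsimp at h1 h2
  subst h1
  subst h2
  have h' : (⟨a, d, (vp.comp (Path.nil : Path V4.v2 V4.v2)).comp up⟩ : PathsIn V4) = mkAB e := h
  rw [Path.comp_nil] at h'
  obtain ⟨ha, hd, hpath⟩ := sig_eq h'
  subst ha
  subst hd
  rw [heq_eq_eq] at hpath
  obtain rfl := pathLoop2 up
  rw [Path.comp_nil] at hpath
  subst hpath
  rfl

lemma D2 {e : V4.Arr V4.v1 V4.v2} {v u : PathsIn V4} (h1 : v.2.1 = (mkAB e).1)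
    (h2 : (mkAB e).2.1 = u.1)
    (h : pcomp V4 (pcomp V4 v (mkAB e) h1) u h2 = pδα ∨
         pcomp V4 (pcomp V4 v (mkAB e) h1) u h2 = pδβ) :
    u = E2 := by
  obtain ⟨a, b, vp⟩ := v
  obtain ⟨c, d, up⟩ := u
  dsimp at h1 h2
  subst h1
  subst h2
  have hd : d = V4.v2 := by
    rcases h with h | h
    · exact (sig_eq h).2.1
    · exact (sig_eq h).2.1
  subst hd
  obtain rfl := pathLoop2 up
  rfl

lemma D2' {e : V4.Arr V4.v1 V4.v2} {v u : PathsIn V4} (h1 : v.2.1 = (mkAB e).1)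
    (h2 : (mkAB e).2.1 = u.1)
    (h : pcomp V4 (pcomp V4 v (mkAB e) h1) u h2 = pαγ ∨
         pcomp V4 (pcomp V4 v (mkAB e) h1) u h2 = pβγ) :
    v = E1 := by
  obtain ⟨a, b, vp⟩ := v
  obtain ⟨c, d, up⟩ := u
  dsimp at h1 h2
  subst h1
  subst h2
  have ha : a = V4.v1 := by
    rcases h with h | h
    · exact (sig_eq h).1
    · exact (sig_eq h).1
  subst ha
  obtain rfl := pathLoop1 vp
  rfl

section QuotUtil
variable (k : Type*) [Field k]

lemma hrel_equiv : Equivalence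
    (fun a b : {p : PathsIn V4 // SigmaClass k V4 (I19 k) p} => HRel k V4 (I19 k) a.1 b.1) :=
  ⟨fun _ => HRel.refl _, HRel.symm, HRel.trans⟩

lemma quot_exact {a b : {p : PathsIn V4 // SigmaClass k V4 (I19 k) p}}
    (h : (Quot.mk _ a : SigmaNu k V4 (I19 k)) = Quot.mk _ b) : HRel k V4 (I19 k) a.1 b.1 :=
  ((hrel_equiv k).eqvGen_iff).mp (Quot.eqvGen_exact h)

lemma quot_exact' {a b : PathsIn V4} {ha : SigmaClass k V4 (I19 k) a}
    {hb : SigmaClass k V4 (I19 k) b}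
    (h : (Quot.mk _ ⟨a, ha⟩ : SigmaNu k V4 (I19 k)) = Quot.mk _ ⟨b, hb⟩) :
    HRel k V4 (I19 k) a b :=
  quot_exact k h

lemma quot_ne {a b : PathsIn V4} (ha : SigmaClass k V4 (I19 k) a) (hb : SigmaClass k V4 (I19 k) b)
    (h : pathLen V4 a ≠ pathLen V4 b) :
    (Quot.mk _ (⟨a, ha⟩ : {p : PathsIn V4 // SigmaClass k V4 (I19 k) p})
      : SigmaNu k V4 (I19 k)) ≠ Quot.mk _ ⟨b, hb⟩ := by
  intro he
  have hr := hrel_R k (quot_exact k he)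
  rcases hr with rfl | ⟨rfl, -⟩
  · exact h rfl
  · exact h (pathLen_sP a).symm

end QuotUtil

section Main
variable (k : Type*) [Field k]

/-- the class of a path in `Σ_ν` -/
abbrev sq (p : PathsIn V4) : SigmaNu k V4 (I19 k) :=
  Quot.mk _ ⟨p, sigmaAll k p⟩

lemma ge_mk (p q u v : PathsIn V4) (h1 : u.2.1 = p.1) (h2 : p.2.1 = v.1)
    (hr : HRel k V4 (I19 k) q (pcomp V4 (pcomp V4 u p h1) v h2)) :
    geSigmaNu k V4 (I19 k) (sq k p) (sq k q) :=
  ⟨p, q, u, v, sigmaAll k p, sigmaAll k q, sigmaAll k u, sigmaAll k v, rfl, rfl, h1, h2, hr⟩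

theorem noRight : ¬ Nonempty (RightCompat k V4 (I19 k)) := by
  rintro ⟨rc⟩
  have ge1α : geSigmaNu k V4 (I19 k) (sq k E1) (sq k Pα) :=
    ge_mk k E1 Pα E1 Pα rfl rfl (HRel.refl _)
  have ge1β : geSigmaNu k V4 (I19 k) (sq k E1) (sq k Pβ) :=
    ge_mk k E1 Pβ E1 Pβ rfl rfl (HRel.refl _)
  have geαδ : geSigmaNu k V4 (I19 k) (sq k Pα) (sq k pδα) :=
    ge_mk k Pα pδα Pδ E2 rfl rfl (HRel.refl _)
  have geβδ : geSigmaNu k V4 (I19 k) (sq k Pβ) (sq k pδα) :=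
    ge_mk k Pβ pδα Pδ E2 rfl rfl (hrel_δ k)
  have ge1δ : geSigmaNu k V4 (I19 k) (sq k E1) (sq k pδα) :=
    ge_mk k E1 pδα Pδ Pα rfl rfl (HRel.refl _)
  have ne1α : sq k E1 ≠ sq k Pα := quot_ne k _ _ (by decide)
  have ne1β : sq k E1 ≠ sq k Pβ := quot_ne k _ _ (by decide)
  have neαδ : sq k Pα ≠ sq k pδα := quot_ne k _ _ (by decide)
  have neβδ : sq k Pβ ≠ sq k pδα := quot_ne k _ _ (by decide)
  have ne1δ : sq k E1 ≠ sq k pδα := quot_ne k _ _ (by decide)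
  -- pin u(E1, Pα) = Pα
  have hu1 : rc.u (sq k E1) (sq k Pα) ge1α ne1α = Pα := by
    obtain ⟨p, v, hp, hv, hs, h1, h2, hc, hs'⟩ := rc.spec (sq k E1) (sq k Pα) ge1α ne1α
    have hpE : p = E1 := by
      rcases hrel_R k (quot_exact' k hs) with h | ⟨h, -⟩
      · exact h
      · rw [h, sP_E1]
    subst hpE
    have hcomp : pcomp V4 (pcomp V4 v E1 h1) (rc.u (sq k E1) (sq k Pα) ge1α ne1α) h2 = Pα := by
      rcases hrel_R k (quot_exact' k hs') with h | ⟨h, hlen⟩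
      · exact h
      · exact absurd hlen (by decide)
    exact D1 h1 h2 hcomp
  -- pin u(E1, Pβ) = Pβ
  have hu1b : rc.u (sq k E1) (sq k Pβ) ge1β ne1β = Pβ := by
    obtain ⟨p, v, hp, hv, hs, h1, h2, hc, hs'⟩ := rc.spec (sq k E1) (sq k Pβ) ge1β ne1β
    have hpE : p = E1 := by
      rcases hrel_R k (quot_exact' k hs) with h | ⟨h, -⟩
      · exact h
      · rw [h, sP_E1]
    subst hpE
    have hcomp : pcomp V4 (pcomp V4 v E1 h1) (rc.u (sq k E1) (sq k Pβ) ge1β ne1β) h2 = Pβ := by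
      rcases hrel_R k (quot_exact' k hs') with h | ⟨h, hlen⟩
      · exact h
      · exact absurd hlen (by decide)
    exact D1 h1 h2 hcomp
  -- pin u(Pα, pδα) = E2
  have hu2 : rc.u (sq k Pα) (sq k pδα) geαδ neαδ = E2 := by
    obtain ⟨p, v, hp, hv, hs, h1, h2, hc, hs'⟩ := rc.spec (sq k Pα) (sq k pδα) geαδ neαδ
    have hpE : p = Pα := by
      rcases hrel_R k (quot_exact' k hs) with h | ⟨h, hlen⟩
      · exact h
      · exact absurd hlen (by decide)
    subst hpE
    have hcomp : pcomp V4 (pcomp V4 v Pα h1) (rc.u (sq k Pα) (sq k pδα) geαδ neαδ) h2 = pδα ∨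
        pcomp V4 (pcomp V4 v Pα h1) (rc.u (sq k Pα) (sq k pδα) geαδ neαδ) h2 = pδβ := by
      rcases hrel_R k (quot_exact' k hs') with h | ⟨h, -⟩
      · exact Or.inl h
      · rw [sP_pδα] at h
        exact Or.inr h
    exact D2 h1 h2 hcomp
  -- pin u(Pβ, pδα) = E2
  have hu2b : rc.u (sq k Pβ) (sq k pδα) geβδ neβδ = E2 := by
    obtain ⟨p, v, hp, hv, hs, h1, h2, hc, hs'⟩ := rc.spec (sq k Pβ) (sq k pδα) geβδ neβδ
    have hpE : p = Pβ := by
      rcases hrel_R k (quot_exact' k hs) with h | ⟨h, hlen⟩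
      · exact h
      · exact absurd hlen (by decide)
    subst hpE
    have hcomp : pcomp V4 (pcomp V4 v Pβ h1) (rc.u (sq k Pβ) (sq k pδα) geβδ neβδ) h2 = pδα ∨
        pcomp V4 (pcomp V4 v Pβ h1) (rc.u (sq k Pβ) (sq k pδα) geβδ neβδ) h2 = pδβ := by
      rcases hrel_R k (quot_exact' k hs') with h | ⟨h, -⟩
      · exact Or.inl h
      · rw [sP_pδα] at h
        exact Or.inr h
    exact D2 h1 h2 hcomp
  -- coherence along the α chain
  have hcoh1 := rc.coh (sq k E1) (sq k Pα) (sq k pδα) ge1α ne1α geαδ neαδ ge1δ ne1δ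
  rw [hu1, hu2] at hcoh1
  obtain ⟨hcc1, hr1⟩ := hcoh1
  have he1 : pcomp V4 Pα E2 hcc1 = Pα := rfl
  rw [he1] at hr1
  -- coherence along the β chain
  have hcoh2 := rc.coh (sq k E1) (sq k Pβ) (sq k pδα) ge1β ne1β geβδ neβδ ge1δ ne1δ
  rw [hu1b, hu2b] at hcoh2
  obtain ⟨hcc2, hr2⟩ := hcoh2
  have he2 : pcomp V4 Pβ E2 hcc2 = Pβ := rfl
  rw [he2] at hr2
  have hαβ : HRel k V4 (I19 k) Pα Pβ := (HRel.symm hr1).trans hr2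
  rcases hrel_R k hαβ with h | ⟨h, hlen⟩
  · exact nαβ h.symm
  · exact absurd hlen (by decide)

theorem noLeft : ¬ Nonempty (LeftCompat k V4 (I19 k)) := by
  rintro ⟨lc⟩
  have ge2α : geSigmaNu k V4 (I19 k) (sq k E2) (sq k Pα) :=
    ge_mk k E2 Pα Pα E2 rfl rfl (HRel.refl _)
  have ge2β : geSigmaNu k V4 (I19 k) (sq k E2) (sq k Pβ) :=
    ge_mk k E2 Pβ Pβ E2 rfl rfl (HRel.refl _)
  have geααγ : geSigmaNu k V4 (I19 k) (sq k Pα) (sq k pαγ) :=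
    ge_mk k Pα pαγ E1 Pγ rfl rfl (HRel.refl _)
  have geβαγ : geSigmaNu k V4 (I19 k) (sq k Pβ) (sq k pαγ) :=
    ge_mk k Pβ pαγ E1 Pγ rfl rfl (hrel_γ k)
  have ge2αγ : geSigmaNu k V4 (I19 k) (sq k E2) (sq k pαγ) :=
    ge_mk k E2 pαγ Pα Pγ rfl rfl (HRel.refl _)
  have ne2α : sq k E2 ≠ sq k Pα := quot_ne k _ _ (by decide)
  have ne2β : sq k E2 ≠ sq k Pβ := quot_ne k _ _ (by decide)
  have neααγ : sq k Pα ≠ sq k pαγ := quot_ne k _ _ (by decide)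
  have neβαγ : sq k Pβ ≠ sq k pαγ := quot_ne k _ _ (by decide)
  have ne2αγ : sq k E2 ≠ sq k pαγ := quot_ne k _ _ (by decide)
  -- pin v(E2, Pα) = Pα
  have hv1 : lc.v (sq k E2) (sq k Pα) ge2α ne2α = Pα := by
    obtain ⟨p, u, hp, hu, hs, h1, h2, hc, hs'⟩ := lc.spec (sq k E2) (sq k Pα) ge2α ne2α
    have hpE : p = E2 := by
      rcases hrel_R k (quot_exact' k hs) with h | ⟨h, -⟩
      · exact h
      · rw [h, sP_E2]
    subst hpE
    have hcomp : pcomp V4 (pcomp V4 (lc.v (sq k E2) (sq k Pα) ge2α ne2α) E2 h1) u h2 = Pα := by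
      rcases hrel_R k (quot_exact' k hs') with h | ⟨h, hlen⟩
      · exact h
      · exact absurd hlen (by decide)
    exact D1' h1 h2 hcomp
  -- pin v(E2, Pβ) = Pβ
  have hv1b : lc.v (sq k E2) (sq k Pβ) ge2β ne2β = Pβ := by
    obtain ⟨p, u, hp, hu, hs, h1, h2, hc, hs'⟩ := lc.spec (sq k E2) (sq k Pβ) ge2β ne2β
    have hpE : p = E2 := by
      rcases hrel_R k (quot_exact' k hs) with h | ⟨h, -⟩
      · exact h
      · rw [h, sP_E2]
    subst hpE
    have hcomp : pcomp V4 (pcomp V4 (lc.v (sq k E2) (sq k Pβ) ge2β ne2β) E2 h1) u h2 = Pβ := by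
      rcases hrel_R k (quot_exact' k hs') with h | ⟨h, hlen⟩
      · exact h
      · exact absurd hlen (by decide)
    exact D1' h1 h2 hcomp
  -- pin v(Pα, pαγ) = E1
  have hv2 : lc.v (sq k Pα) (sq k pαγ) geααγ neααγ = E1 := by
    obtain ⟨p, u, hp, hu, hs, h1, h2, hc, hs'⟩ := lc.spec (sq k Pα) (sq k pαγ) geααγ neααγ
    have hpE : p = Pα := by
      rcases hrel_R k (quot_exact' k hs) with h | ⟨h, hlen⟩
      · exact h
      · exact absurd hlen (by decide)
    subst hpE
    have hcomp : pcomp V4 (pcomp V4 (lc.v (sq k Pα) (sq k pαγ) geααγ neααγ) Pα h1) u h2 = pαγ ∨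
        pcomp V4 (pcomp V4 (lc.v (sq k Pα) (sq k pαγ) geααγ neααγ) Pα h1) u h2 = pβγ := by
      rcases hrel_R k (quot_exact' k hs') with h | ⟨h, -⟩
      · exact Or.inl h
      · rw [sP_pαγ] at h
        exact Or.inr h
    exact D2' h1 h2 hcomp
  -- pin v(Pβ, pαγ) = E1
  have hv2b : lc.v (sq k Pβ) (sq k pαγ) geβαγ neβαγ = E1 := by
    obtain ⟨p, u, hp, hu, hs, h1, h2, hc, hs'⟩ := lc.spec (sq k Pβ) (sq k pαγ) geβαγ neβαγ
    have hpE : p = Pβ := by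
      rcases hrel_R k (quot_exact' k hs) with h | ⟨h, hlen⟩
      · exact h
      · exact absurd hlen (by decide)
    subst hpE
    have hcomp : pcomp V4 (pcomp V4 (lc.v (sq k Pβ) (sq k pαγ) geβαγ neβαγ) Pβ h1) u h2 = pαγ ∨
        pcomp V4 (pcomp V4 (lc.v (sq k Pβ) (sq k pαγ) geβαγ neβαγ) Pβ h1) u h2 = pβγ := by
      rcases hrel_R k (quot_exact' k hs') with h | ⟨h, -⟩
      · exact Or.inl h
      · rw [sP_pαγ] at h
        exact Or.inr h
    exact D2' h1 h2 hcomp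
  -- coherence along the α chain
  have hcoh1 := lc.coh (sq k E2) (sq k Pα) (sq k pαγ) ge2α ne2α geααγ neααγ ge2αγ ne2αγ
  rw [hv1, hv2] at hcoh1
  obtain ⟨hcc1, hr1⟩ := hcoh1
  have he1 : pcomp V4 E1 Pα hcc1 = Pα := rfl
  rw [he1] at hr1
  -- coherence along the β chain
  have hcoh2 := lc.coh (sq k E2) (sq k Pβ) (sq k pαγ) ge2β ne2β geβαγ neβαγ ge2αγ ne2αγ
  rw [hv1b, hv2b] at hcoh2
  obtain ⟨hcc2, hr2⟩ := hcoh2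
  have he2 : pcomp V4 E1 Pβ hcc2 = Pβ := rfl
  rw [he2] at hr2
  have hαβ : HRel k V4 (I19 k) Pα Pβ := (HRel.symm hr1).trans hr2
  rcases hrel_R k hαβ with h | ⟨h, hlen⟩
  · exact nαβ h.symm
  · exact absurd hlen (by decide)

end Main

end S19

/-- For the quiver `0 →δ 1 ⇉(α,β) 2 →γ 3` with
`I = ⟨δ(α−β), (α−β)γ⟩`, the presentation `(Q, I)` is neither right nor left
compatible. -/
theorem not_rightCompat_and_not_leftCompat :
    ¬ Nonempty (RightCompat k V4 (I19 k)) ∧ ¬ Nonempty (LeftCompat k V4 (I19 k)) := by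
  exact ⟨S19.noRight k, S19.noLeft k⟩
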